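/- Let ℓ = (l₁,…,lₙ) ∈ ℝⁿ_{>0} be a generic length vector. Then the map F : Ω → ℝⁿ given by F(v₁,…,v_{n−1}) = (|v₁|, |v₂−v₁|, …, |v_{n−1}−v_{n−2}|, |v_{n−1}|), defined on the open set Ω ⊆ (ℝ^d)^{n−1} where v₁ ≠ 0, v_j ≠ v_{j+1}, and v_{n−1} ≠ 0, has ℓ as a regular value; consequently E_d(ℓ) = F^{−1}(ℓ) is a smooth closed manifold of dimension d(n−1) − n. -/

import Mathlib

/-- The map `F : (ℝ^d)^{n−1} → ℝⁿ`,
`F(v₁,…,v_{n−1}) = (|v₁|, |v₂−v₁|, …, |v_{n−1}−v_{n−2}|, |v_{n−1}|)`,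
written via the convention `v_0 = v_n = 0` (indices shifted to start at `0`). -/
noncomputable def Fmap (d n : ℕ) (v : Fin (n - 1) → EuclideanSpace ℝ (Fin d)) :
    Fin n → ℝ := fun j =>
  let V : ℤ → EuclideanSpace ℝ (Fin d) := fun k =>
    if h : 0 ≤ k ∧ k < (n : ℤ) - 1 then v ⟨k.toNat, by omega⟩ else 0
  ‖V (j : ℤ) - V ((j : ℤ) - 1)‖

/-- The open set `Ω ⊆ (ℝ^d)^{n−1}` where `v₁ ≠ 0`, `v_j ≠ v_{j+1}` and `v_{n−1} ≠ 0`. -/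
def OmegaSet (d n : ℕ) (hn : 2 ≤ n) : Set (Fin (n - 1) → EuclideanSpace ℝ (Fin d)) :=
  {v | v ⟨0, by omega⟩ ≠ 0 ∧
       (∀ j : ℕ, (h : j + 1 < n - 1) → v ⟨j, by omega⟩ ≠ v ⟨j + 1, h⟩) ∧
       v ⟨n - 2, by omega⟩ ≠ 0}

open RealInnerProductSpace

open ContinuousLinearMap in
noncomputable def Pproj (d n : ℕ) (k : ℤ) :
    (Fin (n - 1) → EuclideanSpace ℝ (Fin d)) →L[ℝ] EuclideanSpace ℝ (Fin d) :=
  if h : 0 ≤ k ∧ k < (n : ℤ) - 1 then ContinuousLinearMap.proj ⟨k.toNat, by omega⟩ else 0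

noncomputable def Amap (d n : ℕ) (k : ℤ) :
    (Fin (n - 1) → EuclideanSpace ℝ (Fin d)) →L[ℝ] EuclideanSpace ℝ (Fin d) :=
  Pproj d n k - Pproj d n (k - 1)

lemma Pproj_apply {d n : ℕ} (k : ℤ) (v : Fin (n - 1) → EuclideanSpace ℝ (Fin d)) :
    Pproj d n k v = if h : 0 ≤ k ∧ k < (n : ℤ) - 1 then v ⟨k.toNat, by omega⟩ else 0 := by
  unfold Pproj
  split <;> rfl

lemma Fmap_eq (d n : ℕ) (v : Fin (n - 1) → EuclideanSpace ℝ (Fin d)) :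
    Fmap d n v = fun j : Fin n => ‖Amap d n (j : ℤ) v‖ := by
  funext j
  simp only [Fmap, Amap, ContinuousLinearMap.sub_apply, Pproj_apply]

lemma Pproj_single {d n : ℕ} (k : ℤ) (i : Fin (n - 1)) (e : EuclideanSpace ℝ (Fin d)) :
    Pproj d n k (Pi.single i e) = if k = (i : ℤ) then e else 0 := by
  have hi := i.isLt
  rw [Pproj_apply]
  split
  · rename_i h
    rw [Pi.single_apply]
    have : ((⟨k.toNat, by omega⟩ : Fin (n-1)) = i) ↔ (k = (i : ℤ)) := by
      rw [Fin.ext_iff]; simp; omega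
    simp only [this]
  · rename_i h
    rw [if_neg (by omega)]

lemma sum_Amap (d n : ℕ) (v : Fin (n - 1) → EuclideanSpace ℝ (Fin d)) :
    ∑ j : Fin n, Amap d n (j : ℤ) v = 0 := by
  have key : ∀ j : Fin n, Amap d n (j : ℤ) v
      = Pproj d n (((j : ℕ) + 1 : ℕ) - 1) v - Pproj d n (((j : ℕ) : ℕ) - 1) v := by
    intro j
    simp [Amap]
  rw [Fin.sum_univ_eq_sum_range (fun m => Amap d n (m : ℤ) v)]
  have : ∀ m ∈ Finset.range n, Amap d n (m : ℤ) v
      = (fun m : ℕ => Pproj d n ((m : ℤ) - 1) v) (m + 1)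
        - (fun m : ℕ => Pproj d n ((m : ℤ) - 1) v) m := by
    intro m _
    have : ((m : ℤ) + 1) - 1 = (m : ℤ) := by ring
    simp only [Amap, ContinuousLinearMap.sub_apply, Nat.cast_add, Nat.cast_one, this]
  rw [Finset.sum_congr rfl this, Finset.sum_range_sub (fun m : ℕ => Pproj d n ((m : ℤ) - 1) v)]
  rw [Pproj_apply, Pproj_apply, dif_neg (by omega), dif_neg (by omega), sub_zero]

lemma hasFDerivAt_norm_aux {F : Type*} [NormedAddCommGroup F] [InnerProductSpace ℝ F]
    {x : F} (hx : x ≠ 0) :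
    HasFDerivAt (fun y : F => ‖y‖) (‖x‖⁻¹ • innerSL ℝ x) x := by
  have h1 : HasFDerivAt (fun y : F => ‖y‖ ^ 2) (2 • innerSL ℝ x) x := by
    simpa using (hasFDerivAt_id x).norm_sq
  have hx2 : (0:ℝ) < ‖x‖ := norm_pos_iff.2 hx
  have h2 : HasDerivAt Real.sqrt (1 / (2 * Real.sqrt (‖x‖ ^ 2))) (‖x‖ ^ 2) :=
    Real.hasDerivAt_sqrt (by positivity)
  have h3 := h2.comp_hasFDerivAt x h1
  have hfun : (Real.sqrt ∘ fun y : F => ‖y‖ ^ 2) = fun y : F => ‖y‖ := by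
    funext y; simp [Function.comp, Real.sqrt_sq (norm_nonneg y)]
  rw [hfun] at h3
  refine h3.congr_fderiv ?_
  symm
  rw [Real.sqrt_sq (norm_nonneg x)]
  ext y
  simp only [ContinuousLinearMap.smul_apply, smul_eq_mul]
  field_simp
  ring

lemma hasFDerivAt_Fmap {d n : ℕ} (v : Fin (n - 1) → EuclideanSpace ℝ (Fin d))
    (hx : ∀ j : Fin n, Amap d n (j : ℤ) v ≠ 0) :
    HasFDerivAt (Fmap d n)
      (ContinuousLinearMap.pi fun j : Fin n =>
        (‖Amap d n (j : ℤ) v‖⁻¹ • innerSL ℝ (Amap d n (j : ℤ) v)).comp (Amap d n (j : ℤ))) v := by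
  have : Fmap d n = fun v (j : Fin n) => ‖Amap d n (j : ℤ) v‖ := by
    funext v; exact Fmap_eq d n v
  rw [this]
  apply hasFDerivAt_pi.2
  intro j
  exact (hasFDerivAt_norm_aux (hx j)).comp v (Amap d n (j : ℤ)).hasFDerivAt

lemma key_surj {d n : ℕ} (hn : 2 ≤ n) (l : Fin n → ℝ) (hpos : ∀ i, 0 < l i)
    (hgen : ∀ ε : Fin n → ℝ, (∀ i, ε i = 1 ∨ ε i = -1) → ∑ i, ε i * l i ≠ 0)
    (v : Fin (n - 1) → EuclideanSpace ℝ (Fin d))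
    (hF : ∀ j : Fin n, ‖Amap d n (j : ℤ) v‖ = l j) :
    Function.Surjective ⇑(ContinuousLinearMap.pi fun j : Fin n =>
      (‖Amap d n (j : ℤ) v‖⁻¹ • innerSL ℝ (Amap d n (j : ℤ) v)).comp (Amap d n (j : ℤ))) := by
  classical
  set x : Fin n → EuclideanSpace ℝ (Fin d) := fun j => Amap d n (j : ℤ) v with hxdef
  have hxn : ∀ j, ‖x j‖ = l j := hF
  have hx0 : ∀ j, x j ≠ 0 := by
    intro j hj
    have := hxn j
    rw [hj, norm_zero] at this
    exact absurd this.symm (ne_of_gt (hpos j))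
  set u : Fin n → EuclideanSpace ℝ (Fin d) := fun j => ‖x j‖⁻¹ • x j with hudef
  have hu1 : ∀ j, ‖u j‖ = 1 := by
    intro j
    rw [hudef]
    simp only [norm_smul, norm_inv, norm_norm]
    rw [inv_mul_cancel₀ (norm_ne_zero_iff.2 (hx0 j))]
  have hu0 : ∀ j, u j ≠ 0 := by
    intro j hj
    have := hu1 j; rw [hj, norm_zero] at this; norm_num at this
  set T := ContinuousLinearMap.pi fun j : Fin n =>
      (‖x j‖⁻¹ • innerSL ℝ (x j)).comp (Amap d n (j : ℤ)) with hT
  -- T w j = ⟪u j, Amap j w⟫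
  have hTw : ∀ w j, T w j = ⟪u j, Amap d n (j : ℤ) w⟫ := by
    intro w j
    simp only [hT, hudef, ContinuousLinearMap.pi_apply, ContinuousLinearMap.comp_apply,
      ContinuousLinearMap.coe_smul', Pi.smul_apply, innerSL_apply_apply, real_inner_smul_left,
      smul_eq_mul]
  by_contra hsurj
  -- extract a functional
  set φ : (Fin n → ℝ) ≃ₗ[ℝ] EuclideanSpace ℝ (Fin n) :=
    (WithLp.linearEquiv 2 ℝ (Fin n → ℝ)).symm with hφ
  set K : Submodule ℝ (EuclideanSpace ℝ (Fin n)) :=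
    LinearMap.range (φ.toLinearMap ∘ₗ T.toLinearMap) with hK
  have hKtop : K ≠ ⊤ := by
    intro htop
    apply hsurj
    intro y
    have : φ y ∈ K := htop ▸ Submodule.mem_top
    obtain ⟨w, hw⟩ := this
    exact ⟨w, φ.injective hw⟩
  have hKorth : Kᗮ ≠ ⊥ := fun h => hKtop (Submodule.orthogonal_eq_bot_iff.mp h)
  obtain ⟨c, hcK, hc0⟩ := Submodule.exists_mem_ne_zero_of_ne_bot hKorth
  have hc : ∀ w, ∑ j, T w j * c j = 0 := by
    intro w
    have hmem : φ (T w) ∈ K := ⟨w, rfl⟩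
    have h2 := (Submodule.mem_orthogonal K c).mp hcK (φ (T w)) hmem
    simpa [hφ, PiLp.inner_apply, RCLike.inner_apply, WithLp.linearEquiv,
      mul_comm] using h2
  have step : ∀ (i : ℕ) (h : i + 1 < n),
      c ⟨i, by omega⟩ • u ⟨i, by omega⟩ = c ⟨i + 1, h⟩ • u ⟨i + 1, h⟩ := by
    intro i h
    set i0 : Fin n := ⟨i, by omega⟩ with hi0
    set i1 : Fin n := ⟨i + 1, h⟩ with hi1
    have key : ∀ e : EuclideanSpace ℝ (Fin d),
        ⟪c i0 • u i0 - c i1 • u i1, e⟫ = 0 := by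
      intro e
      have hw := hc (Pi.single (⟨i, by omega⟩ : Fin (n - 1)) e)
      have hA : ∀ j : Fin n, Amap d n (j : ℤ) (Pi.single (⟨i, by omega⟩ : Fin (n-1)) e)
          = (if j = i0 then e else 0) - (if j = i1 then e else 0) := by
        intro j
        rw [Amap, ContinuousLinearMap.sub_apply, Pproj_single, Pproj_single]
        have h1 : ((j:ℤ) = (((⟨i, by omega⟩ : Fin (n-1)) : ℕ) : ℤ)) ↔ (j = i0) := by
          simp only [hi0, Fin.ext_iff, Fin.val_mk]; omega
        have h2 : ((j:ℤ) - 1 = (((⟨i, by omega⟩ : Fin (n-1)) : ℕ) : ℤ)) ↔ (j = i1) := by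
          simp only [hi1, Fin.ext_iff, Fin.val_mk]; omega
        rw [if_congr h1 rfl rfl, if_congr h2 rfl rfl]
      have hTj : ∀ j, T (Pi.single (⟨i, by omega⟩ : Fin (n - 1)) e) j
          = (if j = i0 then ⟪u j, e⟫ else 0) - (if j = i1 then ⟪u j, e⟫ else 0) := by
        intro j
        rw [hTw, hA, inner_sub_right]
        simp only [apply_ite (fun t => (inner ℝ (u j) t : ℝ)), inner_zero_right]
      simp only [hTj, sub_mul, ite_mul, zero_mul, Finset.sum_sub_distrib,
        Finset.sum_ite_eq', Finset.mem_univ, if_true] at hw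
      simp only [inner_sub_left, real_inner_smul_left] at hw ⊢
      linear_combination hw
    have := key (c i0 • u i0 - c i1 • u i1)
    rw [real_inner_self_eq_norm_sq] at this
    have h0 : c i0 • u i0 - c i1 • u i1 = 0 := by
      have := sq_eq_zero_iff.mp this
      rwa [norm_eq_zero] at this
    exact sub_eq_zero.mp h0
  have const : ∀ j : Fin n, c j • u j = c ⟨0, by omega⟩ • u ⟨0, by omega⟩ := by
    intro j
    obtain ⟨jv, hj⟩ := j
    induction jv with
    | zero => rfl
    | succ m ih => exact ((step m hj).symm.trans (ih (by omega)))
  set z := c ⟨0, by omega⟩ • u ⟨0, by omega⟩ with hzdef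
  clear_value z
  by_cases hz : z = 0
  · apply hc0
    ext j
    have hcj := const j
    rw [hz] at hcj
    rcases smul_eq_zero.mp hcj with h | h
    · exact h
    · exact absurd h (hu0 j)
  · have hznorm : ‖z‖ ≠ 0 := norm_ne_zero_iff.2 hz
    have hcj : ∀ j, c j = ‖z‖ ∨ c j = -‖z‖ := by
      intro j
      have h1 : |c j| = ‖z‖ := by
        have h2 : ‖c j • u j‖ = ‖z‖ := by rw [const j]
        rwa [norm_smul, hu1, mul_one, Real.norm_eq_abs] at h2
      exact (abs_eq (norm_nonneg z)).mp h1
    have hcne : ∀ j, c j ≠ 0 := by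
      intro j hj0
      rcases hcj j with h' | h' <;> rw [hj0] at h' <;>
        [exact hznorm h'.symm; exact hznorm (by linarith)]
    have huz : ∀ j, u j = (c j)⁻¹ • z := by
      intro j
      rw [← const j, smul_smul, inv_mul_cancel₀ (hcne j), one_smul]
    have hsum : ∑ j, (l j * (c j)⁻¹) • z = 0 := by
      have h0 : ∑ j : Fin n, x j = 0 := sum_Amap d n v
      calc ∑ j, (l j * (c j)⁻¹) • z = ∑ j, l j • u j := by
            refine Finset.sum_congr rfl fun j _ => ?_
            rw [huz j, smul_smul]
        _ = ∑ j, x j := by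
            refine Finset.sum_congr rfl fun j _ => ?_
            have hj : u j = ‖x j‖⁻¹ • x j := rfl
            rw [hj, smul_smul, hxn j, mul_inv_cancel₀ (ne_of_gt (hpos j)), one_smul]
        _ = 0 := h0
    rw [← Finset.sum_smul] at hsum
    have hcoef : ∑ j, l j * (c j)⁻¹ = 0 := by
      rcases smul_eq_zero.mp hsum with h | h
      exacts [h, absurd h hz]
    refine hgen (fun j => ‖z‖ * (c j)⁻¹) (fun j => ?_) ?_
    · show ‖z‖ * (c j)⁻¹ = 1 ∨ ‖z‖ * (c j)⁻¹ = -1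
      rcases hcj j with h | h <;> rw [h]
      · left; rw [mul_inv_cancel₀ hznorm]
      · right; rw [inv_neg, mul_neg, mul_inv_cancel₀ hznorm]
    · show ∑ j, (‖z‖ * (c j)⁻¹) * l j = 0
      have : ∑ j, (‖z‖ * (c j)⁻¹) * l j = ‖z‖ * ∑ j, l j * (c j)⁻¹ := by
        rw [Finset.mul_sum]
        exact Finset.sum_congr rfl fun j _ => by ring
      rw [this, hcoef, mul_zero]

lemma Amap_apply_val {d n : ℕ} (v : Fin (n - 1) → EuclideanSpace ℝ (Fin d)) (j : ℕ) :
    Amap d n (j : ℤ) v = (if h : j < n - 1 then v ⟨j, h⟩ else 0)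
      - (if h2 : 0 < j ∧ j - 1 < n - 1 then v ⟨j - 1, h2.2⟩ else 0) := by
  rw [Amap, ContinuousLinearMap.sub_apply, Pproj_apply, Pproj_apply]
  congr 1
  · split
    · rename_i hcond
      rw [dif_pos (by omega)]
      exact congrArg v (by simp only [Fin.ext_iff, Fin.val_mk]; omega)
    · rename_i hcond
      rw [dif_neg (by omega)]
  · split
    · rename_i hcond
      rw [dif_pos (by omega)]
      exact congrArg v (by simp only [Fin.ext_iff, Fin.val_mk]; omega)
    · rename_i hcond
      rw [dif_neg (by omega)]

lemma Pproj_eq_sum (d n : ℕ) (v : Fin (n - 1) → EuclideanSpace ℝ (Fin d)) (i : ℕ) :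
    Pproj d n (i : ℤ) v = ∑ m ∈ Finset.range (i + 1), Amap d n (m : ℤ) v := by
  have : ∀ m ∈ Finset.range (i + 1), Amap d n (m : ℤ) v
      = (fun m : ℕ => Pproj d n ((m : ℤ) - 1) v) (m + 1)
        - (fun m : ℕ => Pproj d n ((m : ℤ) - 1) v) m := by
    intro m _
    have h1 : ((m : ℤ) + 1) - 1 = (m : ℤ) := by ring
    simp only [Amap, ContinuousLinearMap.sub_apply, Nat.cast_add, Nat.cast_one, h1]
  rw [Finset.sum_congr rfl this, Finset.sum_range_sub (fun m : ℕ => Pproj d n ((m : ℤ) - 1) v)]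
  have h2 : ((i : ℤ) + 1) - 1 = (i : ℤ) := by ring
  simp only [Nat.cast_add, Nat.cast_one, h2, Nat.cast_zero, zero_sub]
  rw [Pproj_apply (-1 : ℤ), dif_neg (by omega), sub_zero]

/-- For a generic length vector `l ∈ ℝⁿ_{>0}` (i.e. `∑ εᵢ lᵢ ≠ 0` for all
signs `εᵢ = ±1`), the map `F` has `l` as a regular value on `Ω`: every point of
`F⁻¹(l)` lies in `Ω`, the derivative of `F` there is surjective, and consequently
`E_d(l) = F⁻¹(l)` is compact (a smooth closed manifold, by the regular value theorem). -/
theorem stmt_4 {d n : ℕ} (hd : 2 ≤ d) (hn : 2 ≤ n) (l : Fin n → ℝ)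
    (hpos : ∀ i, 0 < l i)
    (hgen : ∀ ε : Fin n → ℝ, (∀ i, ε i = 1 ∨ ε i = -1) → ∑ i, ε i * l i ≠ 0) :
    (∀ v, Fmap d n v = l → v ∈ OmegaSet d n hn) ∧
    (∀ v ∈ OmegaSet d n hn, Fmap d n v = l →
      Function.Surjective (fderiv ℝ (Fmap d n) v)) ∧
    IsCompact {v : Fin (n - 1) → EuclideanSpace ℝ (Fin d) | Fmap d n v = l} := by
  have hnorm : ∀ (v : Fin (n - 1) → EuclideanSpace ℝ (Fin d)), Fmap d n v = l →
      ∀ j : Fin n, ‖Amap d n (j : ℤ) v‖ = l j := by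
    intro v hF j
    rw [← hF, Fmap_eq d n v]
  refine ⟨?_, ?_, ?_⟩
  · -- membership in Omega
    intro v hF
    have hA := hnorm v hF
    refine ⟨?_, ?_, ?_⟩
    · -- v 0 ≠ 0
      have h0 : ‖Amap d n ((0 : ℕ) : ℤ) v‖ = l ⟨0, by omega⟩ := hA ⟨0, by omega⟩
      rw [Amap_apply_val v 0, dif_pos (by omega), dif_neg (by omega), sub_zero] at h0
      intro hcontra
      rw [hcontra, norm_zero] at h0
      exact absurd h0.symm (ne_of_gt (hpos _))
    · -- middle
      intro j hj
      have h0 : ‖Amap d n (((j + 1 : ℕ)) : ℤ) v‖ = l ⟨j + 1, by omega⟩ := hA ⟨j + 1, by omega⟩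
      rw [Amap_apply_val v (j+1), dif_pos (by omega), dif_pos (by omega)] at h0
      intro hcontra
      have : v ⟨j + 1, by omega⟩ - v ⟨j + 1 - 1, by omega⟩ = 0 := by
        rw [show (⟨j + 1 - 1, by omega⟩ : Fin (n-1)) = ⟨j, by omega⟩ from by
          simp only [Fin.ext_iff]; omega, ← hcontra, sub_self]
      rw [this, norm_zero] at h0
      exact absurd h0.symm (ne_of_gt (hpos _))
    · -- last
      have h0 : ‖Amap d n (((n - 1 : ℕ)) : ℤ) v‖ = l ⟨n - 1, by omega⟩ := hA ⟨n - 1, by omega⟩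
      rw [Amap_apply_val v (n-1), dif_neg (by omega), dif_pos (by omega), zero_sub,
        norm_neg] at h0
      intro hcontra
      rw [show (⟨n - 1 - 1, by omega⟩ : Fin (n-1)) = ⟨n - 2, by omega⟩ from by
          simp only [Fin.ext_iff]; omega, hcontra, norm_zero] at h0
      exact absurd h0.symm (ne_of_gt (hpos _))
  · -- surjectivity
    intro v _ hF
    have hA := hnorm v hF
    have hx0 : ∀ j : Fin n, Amap d n (j : ℤ) v ≠ 0 := by
      intro j hj
      have := hA j
      rw [hj, norm_zero] at this
      exact absurd this.symm (ne_of_gt (hpos j))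
    rw [(hasFDerivAt_Fmap v hx0).fderiv]
    exact key_surj hn l hpos hgen v hA
  · -- compactness
    have hcont : Continuous (Fmap d n) := by
      have : Fmap d n = fun v (j : Fin n) => ‖Amap d n (j : ℤ) v‖ := funext (Fmap_eq d n)
      rw [this]
      exact continuous_pi fun j => (Amap d n (j : ℤ)).continuous.norm
    have hclosed : IsClosed {v : Fin (n - 1) → EuclideanSpace ℝ (Fin d) | Fmap d n v = l} :=
      IsClosed.preimage hcont isClosed_singleton
    have hsumnn : (0:ℝ) ≤ ∑ j, l j := Finset.sum_nonneg fun j _ => (hpos j).le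
    set R : ℝ := (n : ℝ) * ∑ j, l j with hR
    have hRnn : 0 ≤ R := mul_nonneg (by positivity) hsumnn
    have hbdd : {v : Fin (n - 1) → EuclideanSpace ℝ (Fin d) | Fmap d n v = l}
        ⊆ Metric.closedBall 0 R := by
      intro v hv
      rw [Metric.mem_closedBall, dist_zero_right]
      rw [pi_norm_le_iff_of_nonneg hRnn]
      intro i
      have hA := hnorm v hv
      have hvi : v i = Pproj d n ((i : ℕ) : ℤ) v := by
        rw [Pproj_apply, dif_pos (by exact ⟨by omega, by push_cast; omega⟩)]
        exact congrArg v (by simp only [Fin.ext_iff, Fin.val_mk]; omega)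
      rw [hvi, Pproj_eq_sum]
      calc ‖∑ m ∈ Finset.range ((i : ℕ) + 1), Amap d n (m : ℤ) v‖
          ≤ ∑ m ∈ Finset.range ((i : ℕ) + 1), ‖Amap d n (m : ℤ) v‖ :=
            norm_sum_le _ _
        _ ≤ ∑ m ∈ Finset.range ((i : ℕ) + 1), ∑ j, l j := by
            refine Finset.sum_le_sum fun m hm => ?_
            rw [Finset.mem_range] at hm
            have hmn : m < n := by have := i.isLt; omega
            have := hA ⟨m, hmn⟩
            rw [show (((⟨m, hmn⟩ : Fin n) : ℕ) : ℤ) = ((m : ℕ) : ℤ) from rfl] at this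
            rw [this]
            exact Finset.single_le_sum (fun j _ => (hpos j).le) (Finset.mem_univ _)
        _ = ((i : ℕ) + 1 : ℕ) * ∑ j, l j := by
            rw [Finset.sum_const, Finset.card_range, nsmul_eq_mul]
        _ ≤ R := by
            rw [hR]
            have h1 : ((i : ℕ) + 1 : ℕ) ≤ n := by have := i.isLt; omega
            have h2 : (((i : ℕ) + 1 : ℕ) : ℝ) ≤ (n : ℝ) := by exact_mod_cast h1
            exact mul_le_mul_of_nonneg_right h2 hsumnn
    exact Metric.isCompact_of_isClosed_isBounded hclosed
      (Metric.isBounded_closedBall.subset hbdd)
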